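/- Combinatorial entropy bound used in the block estimates: for M ∈ ℕ, η ∈ (0,1), and constants c, c₈ > 0, if c is sufficiently large (depending only on η and c₈) then ∑_{j ≥ ηM} C(M,j)·e^{-jc|log μ|/2}·e^{c₈·j·log(c|log μ|/(ημ))} ≤ C'·e^{-ηkμ/8} for all sufficiently small μ > 0, where k = M·c|log μ|/μ and C(M,j) is the binomial coefficient. -/

import Mathlib

lemma choose_le_two_pow' (M j : ℕ) : M.choose j ≤ 2 ^ M := by
  rcases le_or_gt j M with h | h
  · calc M.choose j ≤ ∑ m ∈ Finset.range (M + 1), M.choose m :=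
          Finset.single_le_sum (fun i _ => Nat.zero_le _)
            (Finset.mem_range.2 (Nat.lt_succ_of_le h))
    _ = 2 ^ M := Nat.sum_range_choose M
  · rw [Nat.choose_eq_zero_of_lt h]; positivity

/-- combinatorial entropy bound for the block estimates: for
`η ∈ (0,1)` and `c₈ > 0`, if `c` is sufficiently large (depending only on `η, c₈`)
then for all sufficiently small `μ > 0` and all `M`,
`∑_{j ≥ ηM} C(M,j) e^{-jc|log μ|/2} e^{c₈ j log(c|log μ|/(ημ))} ≤ C' e^{-ηkμ/8}`,
where `k = M·c|log μ|/μ`. -/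
theorem block_entropy_bound
    (η c₈ : ℝ) (hη : 0 < η) (hη1 : η < 1) (hc₈ : 0 < c₈) :
    ∃ c₀ : ℝ, ∀ c : ℝ, c₀ ≤ c →
      ∃ C' : ℝ, 0 < C' ∧ ∃ μ₀ : ℝ, 0 < μ₀ ∧
        ∀ μ : ℝ, 0 < μ → μ < μ₀ → ∀ M : ℕ,
          ∑ j ∈ Finset.Icc ⌈η * (M : ℝ)⌉₊ M,
              (M.choose j : ℝ) * Real.exp (-((j : ℝ) * c * |Real.log μ|) / 2) *
                Real.exp (c₈ * (j : ℝ) * Real.log (c * |Real.log μ| / (η * μ)))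
            ≤ C' * Real.exp (-(η * ((M : ℝ) * c * |Real.log μ| / μ) * μ) / 8) := by
  refine ⟨max (max 1 (16 * c₈)) (max ((32 * c₈) ^ 2)
      (max (16 * c₈ * (1 - Real.log η)) (8 * (1 + Real.log 2) / η))), ?_⟩
  intro c hc
  have hc1 : (1:ℝ) ≤ c := le_trans (le_trans (le_max_left _ _) (le_max_left _ _)) hc
  have hc2 : 16 * c₈ ≤ c := le_trans (le_trans (le_max_right _ _) (le_max_left _ _)) hc
  have hc3 : (32 * c₈) ^ 2 ≤ c :=
    le_trans (le_trans (le_max_left _ _) (le_max_right _ _)) hc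
  have hc4 : 16 * c₈ * (1 - Real.log η) ≤ c :=
    le_trans (le_trans (le_trans (le_max_left _ _) (le_max_right _ _)) (le_max_right _ _)) hc
  have hc5 : 8 * (1 + Real.log 2) / η ≤ c :=
    le_trans (le_trans (le_trans (le_max_right _ _) (le_max_right _ _)) (le_max_right _ _)) hc
  have hcpos : (0:ℝ) < c := lt_of_lt_of_le one_pos hc1
  refine ⟨1, one_pos, Real.exp (-1), Real.exp_pos _, ?_⟩
  intro μ hμ hμ0 M
  have hlogμ : Real.log μ < -1 := by
    have := Real.log_lt_log hμ hμ0
    rwa [Real.log_exp] at this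
  have habs : |Real.log μ| = -Real.log μ := abs_of_neg (by linarith)
  have hLog1 : (1:ℝ) ≤ |Real.log μ| := by rw [habs]; linarith
  have hA1 : (1:ℝ) ≤ c * |Real.log μ| := by nlinarith
  have hApos : (0:ℝ) < c * |Real.log μ| := lt_of_lt_of_le one_pos hA1
  -- key bound: c₈ * log(c|log μ|/(ημ)) ≤ c|log μ| / 4
  have hkey : c₈ * Real.log (c * |Real.log μ| / (η * μ)) ≤ c * |Real.log μ| / 4 := by
    have h1 : Real.log (c * |Real.log μ| / (η * μ))
        = Real.log c + Real.log |Real.log μ| - Real.log η - Real.log μ := by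
      rw [Real.log_div (by positivity) (by positivity),
        Real.log_mul (ne_of_gt hcpos) (by positivity),
        Real.log_mul (ne_of_gt hη) (ne_of_gt hμ)]
      ring
    have hs : Real.log c ≤ 2 * Real.sqrt c := by
      have h := Real.log_le_sub_one_of_pos (Real.sqrt_pos.2 hcpos)
      rw [Real.log_sqrt (le_of_lt hcpos)] at h
      linarith [Real.sqrt_nonneg c]
    have hsc : 32 * c₈ ≤ Real.sqrt c := by
      have h := Real.sqrt_le_sqrt hc3
      rwa [Real.sqrt_sq (by positivity)] at h
    have hsq : Real.sqrt c * Real.sqrt c = c := Real.mul_self_sqrt (le_of_lt hcpos)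
    have h2 : c₈ * Real.log c ≤ c / 16 := by nlinarith [Real.sqrt_nonneg c]
    have h3 : Real.log |Real.log μ| ≤ |Real.log μ| := by
      have := Real.log_le_sub_one_of_pos (lt_of_lt_of_le one_pos hLog1)
      linarith
    have hηlog : Real.log η ≤ 0 := Real.log_nonpos (le_of_lt hη) (le_of_lt hη1)
    have h4 : c₈ * (-Real.log η) ≤ c / 16 := by nlinarith
    have hb1 : c₈ * Real.log |Real.log μ| ≤ c / 16 * |Real.log μ| := by nlinarith
    have hb2 : c₈ * (-Real.log μ) ≤ c / 16 * |Real.log μ| := by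
      rw [← habs]; nlinarith
    have hc16 : c / 16 ≤ c / 16 * |Real.log μ| := by nlinarith
    rw [h1]
    linarith [h2, hb1, hb2, h4, hc16]
  -- termwise bound
  have hterm : ∀ j ∈ Finset.Icc ⌈η * (M : ℝ)⌉₊ M,
      (M.choose j : ℝ) * Real.exp (-((j : ℝ) * c * |Real.log μ|) / 2) *
        Real.exp (c₈ * (j : ℝ) * Real.log (c * |Real.log μ| / (η * μ)))
      ≤ (2 : ℝ) ^ M * Real.exp (-(η * M * (c * |Real.log μ|)) / 4) := by
    intro j hj
    rw [Finset.mem_Icc] at hj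
    have hjM : η * (M : ℝ) ≤ (j : ℝ) :=
      le_trans (Nat.le_ceil _) (Nat.cast_le.2 hj.1)
    have hjnn : (0:ℝ) ≤ (j : ℝ) := Nat.cast_nonneg j
    have hch : (M.choose j : ℝ) ≤ (2 : ℝ) ^ M := by
      exact_mod_cast Nat.cast_le.2 (choose_le_two_pow' M j)
    have hexp : Real.exp (-((j : ℝ) * c * |Real.log μ|) / 2) *
        Real.exp (c₈ * (j : ℝ) * Real.log (c * |Real.log μ| / (η * μ)))
        ≤ Real.exp (-(η * M * (c * |Real.log μ|)) / 4) := by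
      rw [← Real.exp_add]
      apply Real.exp_le_exp.2
      have h5 : (j : ℝ) * (c₈ * Real.log (c * |Real.log μ| / (η * μ)))
          ≤ (j : ℝ) * (c * |Real.log μ| / 4) :=
        mul_le_mul_of_nonneg_left hkey hjnn
      have h7 : η * (M : ℝ) * (c * |Real.log μ|) ≤ (j : ℝ) * (c * |Real.log μ|) :=
        mul_le_mul_of_nonneg_right hjM (le_of_lt hApos)
      linarith [h5, h7]
    calc (M.choose j : ℝ) * Real.exp (-((j : ℝ) * c * |Real.log μ|) / 2) *
          Real.exp (c₈ * (j : ℝ) * Real.log (c * |Real.log μ| / (η * μ)))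
        = (M.choose j : ℝ) * (Real.exp (-((j : ℝ) * c * |Real.log μ|) / 2) *
          Real.exp (c₈ * (j : ℝ) * Real.log (c * |Real.log μ| / (η * μ)))) := by ring
      _ ≤ (2 : ℝ) ^ M * Real.exp (-(η * M * (c * |Real.log μ|)) / 4) :=
          mul_le_mul hch hexp (by positivity) (by positivity)
  have hsum : ∑ j ∈ Finset.Icc ⌈η * (M : ℝ)⌉₊ M,
        (M.choose j : ℝ) * Real.exp (-((j : ℝ) * c * |Real.log μ|) / 2) *
          Real.exp (c₈ * (j : ℝ) * Real.log (c * |Real.log μ| / (η * μ)))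
      ≤ ((M : ℝ) + 1) * ((2 : ℝ) ^ M * Real.exp (-(η * M * (c * |Real.log μ|)) / 4)) := by
    calc ∑ j ∈ Finset.Icc ⌈η * (M : ℝ)⌉₊ M,
          (M.choose j : ℝ) * Real.exp (-((j : ℝ) * c * |Real.log μ|) / 2) *
            Real.exp (c₈ * (j : ℝ) * Real.log (c * |Real.log μ| / (η * μ)))
        ≤ ∑ _j ∈ Finset.Icc ⌈η * (M : ℝ)⌉₊ M,
            (2 : ℝ) ^ M * Real.exp (-(η * M * (c * |Real.log μ|)) / 4) :=
          Finset.sum_le_sum hterm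
      _ = ((Finset.Icc ⌈η * (M : ℝ)⌉₊ M).card : ℝ) *
            ((2 : ℝ) ^ M * Real.exp (-(η * M * (c * |Real.log μ|)) / 4)) := by
          rw [Finset.sum_const, nsmul_eq_mul]
      _ ≤ ((M : ℝ) + 1) * ((2 : ℝ) ^ M * Real.exp (-(η * M * (c * |Real.log μ|)) / 4)) := by
          apply mul_le_mul_of_nonneg_right _ (by positivity)
          rw [Nat.card_Icc]
          calc ((M + 1 - ⌈η * (M : ℝ)⌉₊ : ℕ) : ℝ) ≤ ((M + 1 : ℕ) : ℝ) :=
                Nat.cast_le.2 (Nat.sub_le _ _)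
            _ = (M : ℝ) + 1 := by push_cast; ring
  -- final comparison
  have hRHS : -(η * ((M : ℝ) * c * |Real.log μ| / μ) * μ) / 8
      = -(η * M * (c * |Real.log μ|)) / 8 := by
    field_simp
  rw [hRHS]
  have hfinal : ((M : ℝ) + 1) * ((2 : ℝ) ^ M * Real.exp (-(η * M * (c * |Real.log μ|)) / 4))
      ≤ 1 * Real.exp (-(η * M * (c * |Real.log μ|)) / 8) := by
    have hM1 : (M : ℝ) + 1 ≤ Real.exp M := Real.add_one_le_exp (M : ℝ)
    have h2M : (2 : ℝ) ^ M = Real.exp ((M : ℝ) * Real.log 2) := by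
      rw [Real.exp_nat_mul, Real.exp_log two_pos]
    have hMnn : (0:ℝ) ≤ (M : ℝ) := Nat.cast_nonneg M
    have hlog2 : (0:ℝ) < Real.log 2 := Real.log_pos one_lt_two
    have hexpo : (M : ℝ) + (M : ℝ) * Real.log 2 + (-(η * M * (c * |Real.log μ|)) / 4)
        ≤ -(η * M * (c * |Real.log μ|)) / 8 := by
      have hηc : 8 * (1 + Real.log 2) ≤ η * c := by
        rw [div_le_iff₀ hη] at hc5; linarith [mul_comm η c]
      have hηA : 8 * (1 + Real.log 2) ≤ η * (c * |Real.log μ|) := by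
        calc 8 * (1 + Real.log 2) ≤ η * c := hηc
          _ ≤ η * (c * |Real.log μ|) :=
            mul_le_mul_of_nonneg_left (le_mul_of_one_le_right (le_of_lt hcpos) hLog1)
              (le_of_lt hη)
      linarith [mul_le_mul_of_nonneg_left hηA hMnn]
    calc ((M : ℝ) + 1) * ((2 : ℝ) ^ M * Real.exp (-(η * M * (c * |Real.log μ|)) / 4))
        ≤ Real.exp (M : ℝ) * (Real.exp ((M : ℝ) * Real.log 2) *
            Real.exp (-(η * M * (c * |Real.log μ|)) / 4)) := by
          rw [h2M]
          exact mul_le_mul hM1 le_rfl (by positivity) (by positivity)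
      _ = Real.exp ((M : ℝ) + (M : ℝ) * Real.log 2 + (-(η * M * (c * |Real.log μ|)) / 4)) := by
          rw [← Real.exp_add, ← Real.exp_add, add_assoc]
      _ ≤ 1 * Real.exp (-(η * M * (c * |Real.log μ|)) / 8) := by
          rw [one_mul]; exact Real.exp_le_exp.2 hexpo
  exact le_trans hsum hfinal
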